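/- (Upper bound on the averaged gradient deviation.) Let f_1, …, f_n : ℝ^d → ℝ be convex and L-smooth, let f = (1/n)∑_{i=1}^n f_i, and let x* be a global minimizer of f. Then for any γ > 0 and any points x_1, …, x_n ∈ ℝ^d with average x̄ = (1/n)∑_i x_i, γ²·‖(1/n)·∑_{i=1}^n [∇f_i(x_i) − ∇f_i(x*)]‖² ≤ (2·γ²·L²/n)·∑_{i=1}^n ‖x_i − x̄‖² + 4·L·γ²·(f(x̄) − f(x*)). -/

import Mathlib

open Finset

local notation "⟪" x ", " y "⟫" => @inner ℝ _ _ x y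

section aux
variable {E : Type*} [NormedAddCommGroup E] [InnerProductSpace ℝ E] [CompleteSpace E]

lemma descent_lemma (F : E → ℝ) (G : E → E) (L : ℝ) (hL : 0 < L)
    (hF : ∀ z, HasGradientAt F (G z) z)
    (hLip : ∀ y z, ‖G y - G z‖ ≤ L * ‖y - z‖) (z y : E) :
    F y ≤ F z + ⟪G z, y - z⟫ + L / 2 * ‖y - z‖ ^ 2 := by
  set v := y - z with hv
  set c : ℝ → E := fun t => z + t • v with hcdef
  have hc : ∀ t : ℝ, HasDerivAt c v t := by
    intro t
    simpa [hcdef] using ((hasDerivAt_id t).smul_const v).const_add z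
  have hFc : ∀ t : ℝ, HasDerivAt (fun s => F (c s)) ⟪G (c t), v⟫ t := by
    intro t
    have h1 : HasFDerivAt F (InnerProductSpace.toDual ℝ E (G (c t))) (c t) :=
      (hasGradientAt_iff_hasFDerivAt).1 (hF (c t))
    exact (h1.comp_hasDerivAt t (hc t)).congr_deriv InnerProductSpace.toDual_apply_apply
  set φ : ℝ → ℝ := fun t => F (c t) - t * ⟪G z, v⟫ - L / 2 * t ^ 2 * ‖v‖ ^ 2 with hφdef
  have hφ' : ∀ t : ℝ, HasDerivAt φ (⟪G (c t), v⟫ - ⟪G z, v⟫ - L * t * ‖v‖ ^ 2) t := by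
    intro t
    have h2 : HasDerivAt (fun t : ℝ => t * ⟪G z, v⟫) ⟪G z, v⟫ t := by
      simpa using (hasDerivAt_id t).mul_const (⟪G z, v⟫)
    have h3 : HasDerivAt (fun t : ℝ => L / 2 * t ^ 2 * ‖v‖ ^ 2) (L * t * ‖v‖ ^ 2) t := by
      have := ((hasDerivAt_pow 2 t).const_mul (L / 2)).mul_const (‖v‖ ^ 2)
      exact this.congr_deriv (by ring)
    exact ((hFc t).sub h2).sub h3
  have key : ∀ t ∈ interior (Set.Ici (0:ℝ)), deriv φ t ≤ 0 := by
    intro t ht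
    rw [interior_Ici] at ht
    have ht0 : 0 < t := ht
    rw [(hφ' t).deriv]
    have h4 : ⟪G (c t), v⟫ - ⟪G z, v⟫ = ⟪G (c t) - G z, v⟫ := by
      rw [inner_sub_left]
    have h5 : ⟪G (c t) - G z, v⟫ ≤ ‖G (c t) - G z‖ * ‖v‖ := real_inner_le_norm _ _
    have h6 : ‖G (c t) - G z‖ ≤ L * (t * ‖v‖) := by
      have := hLip (c t) z
      simpa [hcdef, norm_smul, abs_of_pos ht0, mul_assoc] using this
    nlinarith [norm_nonneg v, norm_nonneg (G (c t) - G z)]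
  have hanti : AntitoneOn φ (Set.Ici (0:ℝ)) := by
    apply antitoneOn_of_deriv_nonpos (convex_Ici 0)
    · exact fun t _ => ((hφ' t).differentiableAt).continuousAt.continuousWithinAt
    · exact fun t _ => ((hφ' t).differentiableAt).differentiableWithinAt
    · exact key
  have h10 : φ 1 ≤ φ 0 := hanti (le_refl (0:ℝ)) (by norm_num) zero_le_one
  have hc1 : c 1 = y := by simp [hcdef, hv]
  have hc0 : c 0 = z := by simp [hcdef]
  simp only [hφdef, hc1, hc0, one_mul, one_pow, mul_zero, zero_mul, sub_zero, zero_pow] at h10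
  linarith

end aux

section aux2
variable {E : Type*} [NormedAddCommGroup E] [InnerProductSpace ℝ E] [CompleteSpace E]

lemma cocoercive_at_min (F : E → ℝ) (G : E → E) (L : ℝ) (hL : 0 < L)
    (hF : ∀ z, HasGradientAt F (G z) z)
    (hLip : ∀ y z, ‖G y - G z‖ ≤ L * ‖y - z‖)
    (xstar : E) (hmin : ∀ z, F xstar ≤ F z) (w : E) :
    ‖G w‖ ^ 2 ≤ 2 * L * (F w - F xstar) := by
  set y := w - L⁻¹ • G w with hy
  have hd := descent_lemma F G L hL hF hLip w y
  have h1 : y - w = -(L⁻¹ • G w) := by rw [hy]; abel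
  have h2 : ⟪G w, y - w⟫ = -(L⁻¹ * ‖G w‖ ^ 2) := by
    rw [h1, inner_neg_right, real_inner_smul_right, real_inner_self_eq_norm_sq]
  have h3 : ‖y - w‖ ^ 2 = L⁻¹ ^ 2 * ‖G w‖ ^ 2 := by
    rw [h1, norm_neg, norm_smul]
    simp [abs_of_pos (inv_pos.2 hL), mul_pow]
  have h4 := hmin y
  rw [h2, h3] at hd
  have hLne : L ≠ 0 := ne_of_gt hL
  have : F xstar ≤ F w - L⁻¹ * ‖G w‖ ^ 2 + L / 2 * (L⁻¹ ^ 2 * ‖G w‖ ^ 2) := le_trans h4 (by linarith)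
  have hexp : F w - L⁻¹ * ‖G w‖ ^ 2 + L / 2 * (L⁻¹ ^ 2 * ‖G w‖ ^ 2)
      = F w - (2 * L)⁻¹ * ‖G w‖ ^ 2 := by
    field_simp
    ring
  rw [hexp] at this
  have h2L : (0:ℝ) < 2 * L := by linarith
  have h5 := mul_le_mul_of_nonneg_left this h2L.le
  rw [mul_sub, ← mul_assoc, mul_inv_cancel₀ (ne_of_gt h2L), one_mul] at h5
  linarith

end aux2

/-- **Upper bound on the averaged gradient deviation.**
Let `f₁, …, fₙ : ℝ^d → ℝ` be convex and `L`-smooth, `f = (1/n) ∑ fᵢ`, and `x*` a global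
minimizer of `f`.  Then for any `γ > 0` and points `x₁, …, xₙ` with average `x̄`,
`γ² ‖(1/n) ∑ᵢ [∇fᵢ(xᵢ) − ∇fᵢ(x*)]‖² ≤ (2γ²L²/n) ∑ᵢ ‖xᵢ − x̄‖² + 4Lγ² (f(x̄) − f(x*))`. -/
theorem averaged_gradient_deviation_upper_bound
    (d n : ℕ) (hn : 0 < n)
    (f : Fin n → EuclideanSpace ℝ (Fin d) → ℝ)
    (grad : Fin n → EuclideanSpace ℝ (Fin d) → EuclideanSpace ℝ (Fin d))
    (L : ℝ) (hL : 0 < L)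
    (hdiff : ∀ i z, HasGradientAt (f i) (grad i z) z)
    (hconv : ∀ i, ConvexOn ℝ Set.univ (f i))
    (hsmooth : ∀ i y z, ‖grad i y - grad i z‖ ≤ L * ‖y - z‖)
    (xstar : EuclideanSpace ℝ (Fin d))
    (hmin : ∀ z, (n : ℝ)⁻¹ * ∑ i, f i xstar ≤ (n : ℝ)⁻¹ * ∑ i, f i z)
    (γ : ℝ) (hγ : 0 < γ)
    (x : Fin n → EuclideanSpace ℝ (Fin d)) :
    γ ^ 2 * ‖(n : ℝ)⁻¹ • ∑ i, (grad i (x i) - grad i xstar)‖ ^ 2 ≤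
      2 * γ ^ 2 * L ^ 2 / n * ∑ i, ‖x i - (n : ℝ)⁻¹ • ∑ j, x j‖ ^ 2
      + 4 * L * γ ^ 2 * ((n : ℝ)⁻¹ * ∑ i, f i ((n : ℝ)⁻¹ • ∑ j, x j)
          - (n : ℝ)⁻¹ * ∑ i, f i xstar) := by
  have hnR : (0:ℝ) < (n:ℝ) := by exact_mod_cast hn
  set xbar : EuclideanSpace ℝ (Fin d) := (n : ℝ)⁻¹ • ∑ j, x j with hxbar
  set F : EuclideanSpace ℝ (Fin d) → ℝ := fun z => (n : ℝ)⁻¹ * ∑ i, f i z with hFdef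
  set G : EuclideanSpace ℝ (Fin d) → EuclideanSpace ℝ (Fin d) :=
    fun z => (n : ℝ)⁻¹ • ∑ i, grad i z with hGdef
  -- F has gradient G
  have hFG : ∀ z, HasGradientAt F (G z) z := by
    intro z
    rw [hasGradientAt_iff_hasFDerivAt]
    have hsum : HasFDerivAt (fun y => ∑ i, f i y)
        (∑ i, (InnerProductSpace.toDual ℝ (EuclideanSpace ℝ (Fin d)) (grad i z))) z :=
      HasFDerivAt.fun_sum fun i _ => (hasGradientAt_iff_hasFDerivAt).1 (hdiff i z)
    have h2 := hsum.const_mul ((n:ℝ)⁻¹)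
    have h3 : (InnerProductSpace.toDual ℝ (EuclideanSpace ℝ (Fin d)) (G z) : _)
        = (n:ℝ)⁻¹ • ∑ i, (InnerProductSpace.toDual ℝ (EuclideanSpace ℝ (Fin d)) (grad i z)) := by
      rw [hGdef]; simp [map_smul, map_sum]
    rw [h3]
    exact h2
  -- G is L-Lipschitz
  have hGLip : ∀ y z, ‖G y - G z‖ ≤ L * ‖y - z‖ := by
    intro y z
    have h1 : G y - G z = (n:ℝ)⁻¹ • ∑ i, (grad i y - grad i z) := by
      rw [hGdef]; rw [← smul_sub, ← Finset.sum_sub_distrib]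
    rw [h1, norm_smul]
    have h2 : ‖∑ i, (grad i y - grad i z)‖ ≤ ∑ i : Fin n, (L * ‖y - z‖) := by
      refine le_trans (norm_sum_le _ _) (Finset.sum_le_sum fun i _ => hsmooth i y z)
    have h3 : ∑ i : Fin n, (L * ‖y - z‖) = n * (L * ‖y - z‖) := by
      simp [Finset.sum_const, Finset.card_univ]
    calc ‖(n:ℝ)⁻¹‖ * ‖∑ i, (grad i y - grad i z)‖
        ≤ (n:ℝ)⁻¹ * (n * (L * ‖y - z‖)) := by
          rw [Real.norm_eq_abs, abs_of_pos (inv_pos.2 hnR)]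
          exact mul_le_mul_of_nonneg_left (h2.trans h3.le) (inv_pos.2 hnR).le
      _ = L * ‖y - z‖ := by field_simp
  -- gradient vanishes at xstar
  have hG0 : G xstar = 0 := by
    have hloc : IsLocalMin F xstar := Filter.Eventually.of_forall hmin
    have := hloc.hasFDerivAt_eq_zero ((hasGradientAt_iff_hasFDerivAt).1 (hFG xstar))
    have h2 : (InnerProductSpace.toDual ℝ (EuclideanSpace ℝ (Fin d))) (G xstar)
        = (InnerProductSpace.toDual ℝ (EuclideanSpace ℝ (Fin d))) 0 := by
      rw [this]; simp
    exact (InnerProductSpace.toDual ℝ _).injective h2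
  -- cocoercivity at xbar
  have hcoco : ‖G xbar‖ ^ 2 ≤ 2 * L * (F xbar - F xstar) :=
    cocoercive_at_min F G L hL hFG hGLip xstar hmin xbar
  -- decomposition
  set v : EuclideanSpace ℝ (Fin d) := (n:ℝ)⁻¹ • ∑ i, (grad i (x i) - grad i xbar) with hv
  have hdecomp : (n : ℝ)⁻¹ • ∑ i, (grad i (x i) - grad i xstar) = v + G xbar := by
    have : ∑ i, (grad i (x i) - grad i xstar)
        = ∑ i, (grad i (x i) - grad i xbar) + ∑ i, (grad i xbar - grad i xstar) := by
      rw [← Finset.sum_add_distrib]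
      refine Finset.sum_congr rfl fun i _ => ?_
      abel
    rw [this, smul_add, hv]
    congr 1
    have h2 : ∑ i, (grad i xbar - grad i xstar) = (∑ i, grad i xbar) - ∑ i, grad i xstar :=
      Finset.sum_sub_distrib _ _
    rw [h2, smul_sub]
    rw [hGdef]
    show (n:ℝ)⁻¹ • ∑ i, grad i xbar - (n:ℝ)⁻¹ • ∑ i, grad i xstar = (n:ℝ)⁻¹ • ∑ i, grad i xbar
    rw [show (n:ℝ)⁻¹ • ∑ i, grad i xstar = G xstar from rfl, hG0, sub_zero]
  -- bound on ‖v‖²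
  have hvbound : ‖v‖ ^ 2 ≤ (n:ℝ)⁻¹ * L ^ 2 * ∑ i, ‖x i - xbar‖ ^ 2 := by
    have h1 : ‖v‖ ≤ (n:ℝ)⁻¹ * ∑ i, ‖grad i (x i) - grad i xbar‖ := by
      rw [hv, norm_smul, Real.norm_eq_abs, abs_of_pos (inv_pos.2 hnR)]
      exact mul_le_mul_of_nonneg_left (norm_sum_le _ _) (inv_pos.2 hnR).le
    have h2 : ‖v‖ ^ 2 ≤ ((n:ℝ)⁻¹ * ∑ i, ‖grad i (x i) - grad i xbar‖) ^ 2 := by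
      apply sq_le_sq' _ h1
      have : (0:ℝ) ≤ (n:ℝ)⁻¹ * ∑ i, ‖grad i (x i) - grad i xbar‖ := by positivity
      linarith [norm_nonneg v]
    have h3 : (∑ i, ‖grad i (x i) - grad i xbar‖) ^ 2
        ≤ n * ∑ i, ‖grad i (x i) - grad i xbar‖ ^ 2 := by
      have := sq_sum_le_card_mul_sum_sq (s := Finset.univ)
        (f := fun i => ‖grad i (x i) - grad i xbar‖)
      simpa [Finset.card_univ] using this
    have h4 : ∑ i, ‖grad i (x i) - grad i xbar‖ ^ 2 ≤ ∑ i, L ^ 2 * ‖x i - xbar‖ ^ 2 := by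
      apply Finset.sum_le_sum
      intro i _
      have := hsmooth i (x i) xbar
      nlinarith [norm_nonneg (grad i (x i) - grad i xbar), norm_nonneg (x i - xbar), hL.le]
    have h5 : ∑ i, L ^ 2 * ‖x i - xbar‖ ^ 2 = L ^ 2 * ∑ i, ‖x i - xbar‖ ^ 2 :=
      (Finset.mul_sum _ _ _).symm
    calc ‖v‖ ^ 2 ≤ ((n:ℝ)⁻¹) ^ 2 * (∑ i, ‖grad i (x i) - grad i xbar‖) ^ 2 := by
          rw [mul_pow] at h2; exact h2
      _ ≤ ((n:ℝ)⁻¹) ^ 2 * (n * (L ^ 2 * ∑ i, ‖x i - xbar‖ ^ 2)) := by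
          apply mul_le_mul_of_nonneg_left _ (by positivity)
          calc (∑ i, ‖grad i (x i) - grad i xbar‖) ^ 2
              ≤ n * ∑ i, ‖grad i (x i) - grad i xbar‖ ^ 2 := h3
            _ ≤ n * (L ^ 2 * ∑ i, ‖x i - xbar‖ ^ 2) := by
                rw [← h5]; exact mul_le_mul_of_nonneg_left h4 hnR.le
      _ = (n:ℝ)⁻¹ * L ^ 2 * ∑ i, ‖x i - xbar‖ ^ 2 := by field_simp
  -- combine
  have hsplit : ‖v + G xbar‖ ^ 2 ≤ 2 * ‖v‖ ^ 2 + 2 * ‖G xbar‖ ^ 2 := by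
    have h1 : ‖v + G xbar‖ ≤ ‖v‖ + ‖G xbar‖ := norm_add_le _ _
    have h2 : ‖v + G xbar‖ ^ 2 ≤ (‖v‖ + ‖G xbar‖) ^ 2 :=
      pow_le_pow_left₀ (norm_nonneg _) h1 2
    nlinarith [sq_nonneg (‖v‖ - ‖G xbar‖)]
  rw [hdecomp]
  have hsum_nonneg : (0:ℝ) ≤ ∑ i, ‖x i - xbar‖ ^ 2 := by positivity
  have hfinal : ‖v + G xbar‖ ^ 2
      ≤ 2 * (n:ℝ)⁻¹ * L ^ 2 * (∑ i, ‖x i - xbar‖ ^ 2) + 4 * L * (F xbar - F xstar) := by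
    linarith [hvbound, hcoco, hsplit]
  have hγ2 : (0:ℝ) ≤ γ ^ 2 := sq_nonneg γ
  have := mul_le_mul_of_nonneg_left hfinal hγ2
  show γ ^ 2 * ‖v + G xbar‖ ^ 2 ≤
      2 * γ ^ 2 * L ^ 2 / n * ∑ i, ‖x i - xbar‖ ^ 2 + 4 * L * γ ^ 2 * (F xbar - F xstar)
  calc γ ^ 2 * ‖v + G xbar‖ ^ 2
      ≤ γ ^ 2 * (2 * (n:ℝ)⁻¹ * L ^ 2 * (∑ i, ‖x i - xbar‖ ^ 2) + 4 * L * (F xbar - F xstar)) :=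
        this
    _ = 2 * γ ^ 2 * L ^ 2 / n * ∑ i, ‖x i - xbar‖ ^ 2 + 4 * L * γ ^ 2 * (F xbar - F xstar) := by
        ring
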